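/- arXiv:2312.00601 — 6 statements merged into one kernel-verified Lean document; each statement's English description precedes it below -/
import Mathlib

section
/- Let G be a finite simple graph whose greedy coloring under linear order π uses exactly x ≥ 2 distinct colors. Then there exist an integer q with 0 ≤ q ≤ x - 2 and a subset V' ⊆ V(G) with |V'| = x + q such that V' can be partitioned into q + 1 pairwise disjoint subsets, each of which has cardinality at least 2 and induces a clique in G. -/
/-- `c` is the greedy (FirstFit) coloring of `G` under the linear order on `V`. -/
def IsGreedyColoring {V : Type*} [LinearOrder V] (G : SimpleGraph V) (c : V → ℕ) : Prop :=
  ∀ v : V, IsLeast {n : ℕ | ∀ u : V, G.Adj v u → u < v → c u ≠ n} (c v)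

lemma greedy_nbr {V : Type*} [LinearOrder V] (G : SimpleGraph V) (c : V → ℕ)
    (h : IsGreedyColoring G c) (v : V) (k : ℕ) (hk : k < c v) :
    ∃ u, G.Adj v u ∧ u < v ∧ c u = k := by
  by_contra hcon
  push_neg at hcon
  have hmem : k ∈ {n : ℕ | ∀ u : V, G.Adj v u → u < v → c u ≠ n} := by
    intro u hadj hlt
    exact hcon u hadj hlt
  exact absurd ((h v).2 hmem) (not_le.mpr hk)

lemma greedy_cliques {V : Type*} [Fintype V] [DecidableEq V] [LinearOrder V]
    (G : SimpleGraph V) (c : V → ℕ) (h : IsGreedyColoring G c) :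
    ∀ m : ℕ, 1 ≤ m → ∀ v : V, c v = m →
    ∃ P : Finset (Finset V), 1 ≤ P.card ∧
      ((P : Set (Finset V)).Pairwise fun K K' => Disjoint K K') ∧
      (∀ K ∈ P, 2 ≤ K.card ∧ G.IsClique (K : Set V) ∧ ∀ w ∈ K, w ≤ v) ∧
      ∑ K ∈ P, K.card = m + P.card := by
  intro m hm
  induction m, hm using Nat.le_induction with
  | base =>
    intro v hv
    obtain ⟨u, hadj, hlt, hcu⟩ := greedy_nbr G c h v 0 (by omega)
    refine ⟨{({v, u} : Finset V)}, by simp, by simp, ?_, ?_⟩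
    · intro K hK
      simp only [Finset.mem_singleton] at hK
      subst hK
      have hne : v ≠ u := (ne_of_gt hlt)
      refine ⟨by rw [Finset.card_insert_of_notMem (by simpa using hne), Finset.card_singleton], ?_, ?_⟩
      · intro a ha b hb hab
        simp only [Finset.coe_insert, Finset.coe_singleton, Set.mem_insert_iff,
          Set.mem_singleton_iff] at ha hb
        rcases ha with rfl | rfl <;> rcases hb with rfl | rfl
        · exact absurd rfl hab
        · exact hadj
        · exact hadj.symm
        · exact absurd rfl hab
      · intro w hw
        simp only [Finset.mem_insert, Finset.mem_singleton] at hw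
        rcases hw with rfl | rfl
        · exact le_refl _
        · exact le_of_lt hlt
    · have hne : v ≠ u := (ne_of_gt hlt)
      rw [Finset.sum_singleton, Finset.card_singleton,
        Finset.card_insert_of_notMem (by simpa using hne), Finset.card_singleton]
  | succ m hm ih =>
    intro v hv
    -- neighbor of color m
    obtain ⟨u, huadj, hult, hcu⟩ := greedy_nbr G c h v m (by omega)
    obtain ⟨P, hP1, hPdisj, hPprop, hPsum⟩ := ih u hcu
    -- neighbors of each color k < m+1
    have hy : ∀ k : Fin (m + 1), ∃ yk : V, G.Adj v yk ∧ yk < v ∧ c yk = (k : ℕ) := by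
      intro k
      exact greedy_nbr G c h v k (by rw [hv]; exact k.isLt)
    choose y hyadj hylt hyc using hy
    have yinj : Function.Injective y := by
      intro k k' hkk'
      apply Fin.ext
      rw [← hyc k, ← hyc k', hkk']
    set U : Finset V := P.biUnion id with hU
    have hUcard : U.card = ∑ K ∈ P, K.card := by
      apply Finset.card_biUnion
      intro K hK K' hK' hne
      exact hPdisj (Finset.mem_coe.mpr hK) (Finset.mem_coe.mpr hK') hne
    have hUle : ∀ w ∈ U, w ≤ u := by
      intro w hw
      obtain ⟨K, hK, hwK⟩ := Finset.mem_biUnion.mp hw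
      exact (hPprop K hK).2.2 w hwK
    have hvU : v ∉ U := fun hvin => absurd (hUle v hvin) (not_le.mpr hult)
    by_cases hcase : ∀ k : Fin (m + 1), y k ∈ U
    · -- pigeonhole: some clique K₀ ⊆ Y, add v to it
      set Y : Finset V := Finset.univ.image y with hYdef
      have hYcard : Y.card = m + 1 := by
        rw [hYdef, Finset.card_image_of_injective _ yinj, Finset.card_univ, Fintype.card_fin]
      have hYU : Y ⊆ U := by
        intro w hw
        obtain ⟨k, _, rfl⟩ := Finset.mem_image.mp hw
        exact hcase k
      have hsdiff : (U \ Y).card = P.card - 1 := by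
        rw [Finset.card_sdiff_of_subset hYU, hUcard, hPsum, hYcard]
        omega
      have hex : ∃ K₀ ∈ P, K₀ ⊆ Y := by
        by_contra hcon
        push_neg at hcon
        have hz : ∀ K : Finset V, ∃ z : V, K ∈ P → z ∈ K ∧ z ∉ Y := by
          intro K
          by_cases hK : K ∈ P
          · obtain ⟨z, hz1, hz2⟩ := Finset.not_subset.mp (hcon K hK)
            exact ⟨z, fun _ => ⟨hz1, hz2⟩⟩
          · exact ⟨v, fun hmem => absurd hmem hK⟩
        choose z hzp using hz
        have hmaps : ∀ K ∈ P, z K ∈ U \ Y := by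
          intro K hK
          obtain ⟨hz1, hz2⟩ := hzp K hK
          exact Finset.mem_sdiff.mpr ⟨Finset.mem_biUnion.mpr ⟨K, hK, hz1⟩, hz2⟩
        have hinj : Set.InjOn z P := by
          intro K hK K' hK' heq
          by_contra hne
          have hd := hPdisj hK hK' hne
          have h1 : z K ∈ K := (hzp K (Finset.mem_coe.mp hK)).1
          have h2 : z K' ∈ K' := (hzp K' (Finset.mem_coe.mp hK')).1
          rw [heq] at h1
          exact Finset.disjoint_left.mp hd h1 h2
        have := Finset.card_le_card_of_injOn z hmaps hinj
        omega
      obtain ⟨K₀, hK₀P, hK₀Y⟩ := hex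
      have hadjall : ∀ w ∈ K₀, G.Adj v w := by
        intro w hw
        obtain ⟨k, _, rfl⟩ := Finset.mem_image.mp (hK₀Y hw)
        exact hyadj k
      have hK₀le : ∀ w ∈ K₀, w ≤ u := fun w hw => (hPprop K₀ hK₀P).2.2 w hw
      have hvK₀ : v ∉ K₀ := fun hvin => absurd (hK₀le v hvin) (not_le.mpr hult)
      set newK : Finset V := insert v K₀ with hnewK
      have hnewnotin : newK ∉ P.erase K₀ := by
        intro hmem
        have hKP := Finset.mem_of_mem_erase hmem
        have : v ∈ newK := Finset.mem_insert_self v K₀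
        have hle := (hPprop newK hKP).2.2 v this
        exact absurd hle (not_le.mpr hult)
      refine ⟨insert newK (P.erase K₀), ?_, ?_, ?_, ?_⟩
      · rw [Finset.card_insert_of_notMem hnewnotin, Finset.card_erase_of_mem hK₀P]
        omega
      · intro K hK K' hK' hne
        simp only [Finset.coe_insert, Set.mem_insert_iff, Finset.mem_coe,
          Finset.mem_erase] at hK hK'
        have hnewdisj : ∀ K'' : Finset V, K'' ≠ K₀ → K'' ∈ P → Disjoint newK K'' := by
          intro K'' hne'' hK''P
          rw [hnewK, Finset.disjoint_insert_left]
          constructor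
          · intro hvin
            exact absurd (hUle v (Finset.mem_biUnion.mpr ⟨K'', hK''P, hvin⟩)) (not_le.mpr hult)
          · exact hPdisj (Finset.mem_coe.mpr hK₀P) (Finset.mem_coe.mpr hK''P) (fun hh => hne'' hh.symm)
        rcases hK with rfl | ⟨hne1, hK1⟩ <;> rcases hK' with rfl | ⟨hne2, hK2⟩
        · exact absurd rfl hne
        · exact hnewdisj K' hne2 hK2
        · exact (hnewdisj K hne1 hK1).symm
        · exact hPdisj (Finset.mem_coe.mpr hK1) (Finset.mem_coe.mpr hK2) hne
      · intro K hK
        rcases Finset.mem_insert.mp hK with rfl | hKmem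
        · have hc2 : 2 ≤ K₀.card := (hPprop K₀ hK₀P).1
          refine ⟨?_, ?_, ?_⟩
          · rw [hnewK, Finset.card_insert_of_notMem hvK₀]; omega
          · rw [hnewK, Finset.coe_insert]
            apply SimpleGraph.IsClique.insert (hPprop K₀ hK₀P).2.1
            intro b hb _
            exact hadjall b hb
          · intro w hw
            rcases Finset.mem_insert.mp hw with rfl | hwK₀
            · exact le_refl _
            · exact le_of_lt (lt_of_le_of_lt (hK₀le w hwK₀) hult)
        · obtain ⟨h1, h2, h3⟩ := hPprop K (Finset.mem_of_mem_erase hKmem)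
          exact ⟨h1, h2, fun w hw => le_of_lt (lt_of_le_of_lt (h3 w hw) hult)⟩
      · rw [Finset.sum_insert hnewnotin, Finset.card_insert_of_notMem hnewnotin,
          Finset.card_erase_of_mem hK₀P]
        have hsplit : K₀.card + ∑ K ∈ P.erase K₀, K.card = ∑ K ∈ P, K.card :=
          Finset.add_sum_erase P Finset.card hK₀P
        have hnewcard : newK.card = K₀.card + 1 := by
          rw [hnewK, Finset.card_insert_of_notMem hvK₀]
        omega
    · -- some y k outside U : add a fresh edge {v, y k}
      push_neg at hcase
      obtain ⟨k, hkU⟩ := hcase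
      set e : Finset V := {v, y k} with he
      have hvyk : v ≠ y k := ne_of_gt (hylt k)
      have hecard : e.card = 2 := by
        rw [he, Finset.card_insert_of_notMem (by simpa using hvyk), Finset.card_singleton]
      have henotin : e ∉ P := by
        intro hmem
        have : v ∈ e := Finset.mem_insert_self _ _
        have := (hPprop e hmem).2.2 v this
        exact absurd this (not_le.mpr hult)
      refine ⟨insert e P, ?_, ?_, ?_, ?_⟩
      · rw [Finset.card_insert_of_notMem henotin]; omega
      · intro K hK K' hK' hne
        simp only [Finset.coe_insert, Set.mem_insert_iff, Finset.mem_coe] at hK hK'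
        have hedisj : ∀ K'' ∈ P, Disjoint e K'' := by
          intro K'' hK''
          rw [he, Finset.disjoint_insert_left, Finset.disjoint_singleton_left]
          constructor
          · intro hvin
            exact absurd (hUle v (Finset.mem_biUnion.mpr ⟨K'', hK'', hvin⟩)) (not_le.mpr hult)
          · intro hyin
            exact hkU (Finset.mem_biUnion.mpr ⟨K'', hK'', hyin⟩)
        rcases hK with rfl | hK1 <;> rcases hK' with rfl | hK2
        · exact absurd rfl hne
        · exact hedisj K' hK2
        · exact (hedisj K hK1).symm
        · exact hPdisj (Finset.mem_coe.mpr hK1) (Finset.mem_coe.mpr hK2) hne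
      · intro K hK
        rcases Finset.mem_insert.mp hK with rfl | hKmem
        · refine ⟨by omega, ?_, ?_⟩
          · intro a ha b hb hab
            simp only [he, Finset.coe_insert, Finset.coe_singleton, Set.mem_insert_iff,
              Set.mem_singleton_iff] at ha hb
            rcases ha with rfl | rfl <;> rcases hb with rfl | rfl
            · exact absurd rfl hab
            · exact hyadj k
            · exact (hyadj k).symm
            · exact absurd rfl hab
          · intro w hw
            rcases Finset.mem_insert.mp hw with rfl | hw'
            · exact le_refl _
            · rw [Finset.mem_singleton] at hw'
              subst hw'
              exact le_of_lt (hylt k)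
        · obtain ⟨h1, h2, h3⟩ := hPprop K hKmem
          exact ⟨h1, h2, fun w hw => le_of_lt (lt_of_le_of_lt (h3 w hw) hult)⟩
      · rw [Finset.sum_insert henotin, Finset.card_insert_of_notMem henotin, hecard]
        omega

/-- Structural theorem about FirstFit: if greedy uses exactly `x ≥ 2` colors, then there is
`q` with `0 ≤ q ≤ x - 2` and a family of `q + 1` pairwise disjoint vertex subsets, each of
size at least 2 inducing a clique, whose union has cardinality `x + q`. -/
theorem firstFit_structural {V : Type*} [Fintype V] [DecidableEq V] [LinearOrder V]
    (G : SimpleGraph V) (c : V → ℕ) (h : IsGreedyColoring G c)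
    (x : ℕ) (hx : 2 ≤ x) (hcolors : (Finset.univ.image c).card = x) :
    ∃ q : ℕ, q ≤ x - 2 ∧ ∃ P : Finset (Finset V),
      P.card = q + 1 ∧
      ((P : Set (Finset V)).Pairwise fun K K' => Disjoint K K') ∧
      (∀ K ∈ P, 2 ≤ K.card ∧ G.IsClique (K : Set V)) ∧
      (P.biUnion id).card = x + q := by
  -- find a vertex of color x - 1
  set S : Finset ℕ := Finset.univ.image c with hS
  have hSne : S.Nonempty := Finset.card_pos.mp (by omega)
  set M : ℕ := S.max' hSne with hM
  obtain ⟨v, _, hvM⟩ := Finset.mem_image.mp (S.max'_mem hSne)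
  have hSrange : S = Finset.range (M + 1) := by
    apply Finset.Subset.antisymm
    · intro k hk
      rw [Finset.mem_range]
      exact Nat.lt_succ_of_le (S.le_max' k hk)
    · intro k hk
      rw [Finset.mem_range] at hk
      rcases Nat.lt_succ_iff_lt_or_eq.mp hk with hlt | rfl
      · obtain ⟨w, _, _, hcw⟩ := greedy_nbr G c h v k (by omega)
        exact Finset.mem_image.mpr ⟨w, Finset.mem_univ w, hcw⟩
      · exact Finset.mem_image.mpr ⟨v, Finset.mem_univ v, hvM⟩
  have hMx : M = x - 1 := by
    have : S.card = M + 1 := by rw [hSrange, Finset.card_range]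
    omega
  obtain ⟨P, hP1, hPdisj, hPprop, hPsum⟩ :=
    greedy_cliques G c h M (by omega) v hvM
  refine ⟨P.card - 1, ?_, P, by omega, hPdisj, fun K hK => ⟨(hPprop K hK).1, (hPprop K hK).2.1⟩, ?_⟩
  · -- q ≤ x - 2
    have hlb : 2 * P.card ≤ ∑ K ∈ P, K.card := by
      calc 2 * P.card = ∑ _K ∈ P, 2 := by rw [Finset.sum_const, smul_eq_mul, mul_comm]
        _ ≤ ∑ K ∈ P, K.card := Finset.sum_le_sum (fun K hK => (hPprop K hK).1)
    omega
  · have hUcard : (P.biUnion id).card = ∑ K ∈ P, K.card := by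
      apply Finset.card_biUnion
      intro K hK K' hK' hne
      exact hPdisj (Finset.mem_coe.mpr hK) (Finset.mem_coe.mpr hK') hne
    omega
end

section
/- Let G be a finite simple graph with a linear order π and a prediction P : V(G) → ℕ. Fix a value i, let G_i be the subgraph of G induced by {v : P(v) = i}, and let x_i be the number of colors used by the greedy coloring of G_i under the order induced by π. Let O be any proper coloring of G and let η_i = |{v ∈ V(G_i) : O(v) ≠ P(v)}|. Then x_i ≤ η_i + 1. -/
/-- Within a single prediction class, the number of colors used by greedy on the induced
subgraph is at most the number of prediction errors in the class plus 1. -/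
theorem palette_colors_le_errors_succ {V : Type*} [Fintype V] [LinearOrder V]
    (G : SimpleGraph V) (P O : V → ℕ) (hO : ∀ u v : V, G.Adj u v → O u ≠ O v)
    (i : ℕ) (c : {v : V | P v = i} → ℕ)
    (hc : IsGreedyColoring (G.induce {v : V | P v = i}) c) :
    (Set.range c).ncard ≤ {v : V | P v = i ∧ O v ≠ P v}.ncard + 1 := by
  classical
  -- "bad" colors: those whose whole greedy color class is correctly predicted
  set bad : Set ℕ :=
    {k ∈ Set.range c | ∀ v : {v : V | P v = i}, c v = k → O v.1 = i} with hbad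
  have key : ∀ k j : ℕ, k < j → (∀ v : {v : V | P v = i}, c v = k → O v.1 = i) →
      (∀ v : {v : V | P v = i}, c v = j → O v.1 = i) →
      (∀ v : {v : V | P v = i}, c v ≠ j) := by
    intro k j hkj hk hj v hv
    obtain ⟨hmem, hlb⟩ := hc v
    -- k < c v = j, so k is not least; some earlier neighbor has color k
    have hknot : k ∉ {n : ℕ | ∀ u : {v : V | P v = i},
        (G.induce {v : V | P v = i}).Adj v u → u < v → c u ≠ n} := by
      intro hkin
      have := hlb hkin
      omega
    simp only [Set.mem_setOf_eq, not_forall] at hknot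
    obtain ⟨u, hadj, _, hcu⟩ := hknot
    rw [not_not] at hcu
    have hGadj : G.Adj v.1 u.1 := hadj
    exact hO v.1 u.1 hGadj (by rw [hj v hv, hk u hcu])
  have hbadsub : bad.Subsingleton := by
    intro k hk j hj
    by_contra hne
    rcases lt_or_gt_of_ne hne with h | h
    · obtain ⟨v, hv⟩ := hj.1
      exact key k j h hk.2 hj.2 v hv
    · obtain ⟨v, hv⟩ := hk.1
      exact key j k h hj.2 hk.2 v hv
  have hbadcard : bad.ncard ≤ 1 := by
    rcases hbadsub.eq_empty_or_singleton with h | ⟨a, h⟩ <;> simp [h]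
  have hEfin : ({v : V | P v = i ∧ O v ≠ P v}).Finite := Set.toFinite _
  -- injection from good colors into errors
  have hgood : (Set.range c \ bad).ncard ≤ ({v : V | P v = i ∧ O v ≠ P v}).ncard := by
    rcases Set.eq_empty_or_nonempty (Set.range c \ bad) with hemp | ⟨k0, hk0⟩
    · simp [hemp]
    have hex : ∀ k ∈ Set.range c \ bad, ∃ v : {v : V | P v = i}, c v = k ∧ O v.1 ≠ i := by
      intro k hk
      have h2 : ¬ ∀ v : {v : V | P v = i}, c v = k → O v.1 = i := by
        intro h; exact hk.2 ⟨hk.1, h⟩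
      push_neg at h2
      exact h2
    choose f hf1 hf2 using hex
    have hne : Nonempty V := ⟨(f k0 hk0).1⟩
    refine Set.ncard_le_ncard_of_injOn
      (fun k => if h : k ∈ Set.range c \ bad then (f k h).1 else Classical.arbitrary V)
      (fun k hk => ?_) (fun k hk j hj hkj => ?_) hEfin
    · simp only [dif_pos hk]
      refine ⟨(f k hk).2, ?_⟩
      rw [show P (f k hk).1 = i from (f k hk).2]
      exact hf2 k hk
    · simp only [dif_pos hk, dif_pos hj] at hkj
      have : f k hk = f j hj := Subtype.ext hkj
      rw [← hf1 k hk, ← hf1 j hj, this]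
  calc (Set.range c).ncard = (Set.range c \ bad).ncard + bad.ncard := by
        rw [← Set.ncard_diff_add_ncard_of_subset (show bad ⊆ Set.range c from fun k hk => hk.1) (Set.toFinite _)]
    _ ≤ ({v : V | P v = i ∧ O v ≠ P v}).ncard + 1 := Nat.add_le_add hgood hbadcard
end

section
/- Let G be a finite simple graph with chromatic number χ(G), π a linear order on V(G), and P : V(G) → ℕ a prediction. The algorithm FirstFitPredictions colors, for each value i in the range of P, the induced subgraph G_i = G[{v : P(v) = i}] greedily in π-order using a color palette disjoint from all other palettes. Let x(G) be the total number of distinct colors it uses and let η(G) = min over proper colorings O of G using colors from ℕ of |{v : P(v) ≠ O(v)}|. Then x(G) ≤ η(G) + χ(G). -/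
/-- FirstFitPredictions: coloring each prediction class `G_i = G[{v : P v = i}]` greedily
with pairwise disjoint palettes uses at most `η(G) + χ(G)` colors in total, where `η(G)` is
the minimum number of wrongly predicted vertices over all optimal (χ(G)-color) proper
colorings of `G`. -/
theorem ffp_colors_le_error_add_chromatic {V : Type*} [Fintype V] [DecidableEq V]
    [LinearOrder V] (G : SimpleGraph V) (P : V → ℕ)
    (c : (i : ℕ) → ({v : V | P v = i} → ℕ))
    (hc : ∀ i : ℕ, IsGreedyColoring (G.induce {v : V | P v = i}) (c i))
    (k : ℕ) (hk : G.chromaticNumber = k)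
    (η : ℕ)
    (hη : IsLeast {n : ℕ | ∃ O : V → ℕ, (∀ u v : V, G.Adj u v → O u ≠ O v) ∧
      (Set.range O).ncard = k ∧ n = {v : V | P v ≠ O v}.ncard} η) :
    (∑ i ∈ Finset.univ.image P, (Set.range (c i)).ncard) ≤ η + k := by
  classical
  obtain ⟨⟨O, hOp, hOr, hηe⟩, -⟩ := hη
  set Wrong : Finset V := Finset.univ.filter (fun v => P v ≠ O v) with hWrong
  have hηcard : η = Wrong.card := by
    rw [hηe, show {v : V | P v ≠ O v} = ↑Wrong from by ext v; simp [hWrong],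
      Set.ncard_coe_finset]
  have hkcard : (Finset.univ.image O).card = k := by
    rw [show Set.range O = ↑(Finset.univ.image O) from by ext n; simp,
      Set.ncard_coe_finset] at hOr
    exact hOr
  have key : ∀ i : ℕ, (Set.range (c i)).ncard ≤
      (Wrong.filter (fun v => P v = i)).card +
        (if ∃ v : V, P v = i ∧ O v = i then 1 else 0) := by
    intro i
    set S := {v : V | P v = i} with hS
    set T : Finset ℕ := Finset.univ.image (c i) with hT
    set A : Finset ℕ :=
      (Finset.univ.filter (fun v : S => O (v : V) ≠ i)).image (c i) with hA
    have hrange : (Set.range (c i)).ncard = T.card := by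
      rw [show Set.range (c i) = ↑T from by ext n; simp [hT], Set.ncard_coe_finset]
    have hAcard : A.card ≤ (Wrong.filter (fun v => P v = i)).card := by
      refine (Finset.card_image_le).trans ?_
      refine Finset.card_le_card_of_injOn (fun v => (v : V)) ?_ ?_
      · intro v hv
        simp only [Finset.mem_coe, Finset.mem_filter, Finset.mem_univ, true_and] at hv
        have hPv : P (v : V) = i := v.2
        simp only [Finset.mem_coe, Finset.mem_filter, Finset.mem_univ, true_and, hWrong]
        exact ⟨by rw [hPv]; exact fun h => hv h.symm, hPv⟩
      · intro a _ b _ h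
        exact Subtype.ext h
    have hsdiff : (T \ A).card ≤ (if ∃ v : V, P v = i ∧ O v = i then 1 else 0) := by
      have nolt : ∀ s ∈ T \ A, ∀ t ∈ T \ A, s < t → False := by
        intro s hs t ht hst
        obtain ⟨hsT, hsA⟩ := Finset.mem_sdiff.mp hs
        obtain ⟨htT, htA⟩ := Finset.mem_sdiff.mp ht
        obtain ⟨v, -, hv⟩ := Finset.mem_image.mp htT
        have hgreedy := hc i v
        have hnot : ¬ ∀ u : S, (G.induce S).Adj v u → u < v → c i u ≠ s := by
          intro hall
          have := hgreedy.2 hall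
          omega
        push_neg at hnot
        obtain ⟨u, hadj, hlt, hcu⟩ := hnot
        have hOu : O (u : V) = i := by
          by_contra hne
          exact hsA (Finset.mem_image.mpr ⟨u,
            Finset.mem_filter.mpr ⟨Finset.mem_univ u, hne⟩, hcu⟩)
        have hOv : O (v : V) = i := by
          by_contra hne
          exact htA (Finset.mem_image.mpr ⟨v,
            Finset.mem_filter.mpr ⟨Finset.mem_univ v, hne⟩, hv⟩)
        have hadj' : G.Adj (v : V) (u : V) := by simpa using hadj
        exact hOp _ _ hadj' (hOv.trans hOu.symm)
      by_cases h : ∃ v : V, P v = i ∧ O v = i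
      · simp only [h, if_true]
        refine Finset.card_le_one.mpr ?_
        intro a ha b hb
        rcases lt_trichotomy a b with hab | hab | hab
        · exact absurd (nolt a ha b hb hab) (fun h => h)
        · exact hab
        · exact absurd (nolt b hb a ha hab) (fun h => h)
      · simp only [h, if_false, Nat.le_zero, Finset.card_eq_zero]
        ext t
        simp only [Finset.mem_sdiff, Finset.notMem_empty, iff_false, not_and, not_not]
        intro htT
        obtain ⟨v, -, hv⟩ := Finset.mem_image.mp htT
        have hOv : O (v : V) ≠ i := fun hOv => h ⟨v, v.2, hOv⟩
        exact Finset.mem_image.mpr ⟨v,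
          Finset.mem_filter.mpr ⟨Finset.mem_univ v, hOv⟩, hv⟩
    have hsplit : T.card ≤ (T \ A).card + A.card := by
      refine le_trans (Finset.card_le_card ?_) (Finset.card_union_le _ _)
      intro t ht
      by_cases h : t ∈ A
      · exact Finset.mem_union.mpr (Or.inr h)
      · exact Finset.mem_union.mpr (Or.inl (Finset.mem_sdiff.mpr ⟨ht, h⟩))
    rw [hrange]
    omega
  have hsum1 : ∑ i ∈ Finset.univ.image P, (Wrong.filter (fun v => P v = i)).card
      = Wrong.card := by
    exact (Finset.card_eq_sum_card_fiberwise
      (fun v _ => Finset.mem_image.mpr ⟨v, Finset.mem_univ v, rfl⟩)).symm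
  have hsum2 : ∑ i ∈ Finset.univ.image P,
      (if ∃ v : V, P v = i ∧ O v = i then 1 else 0) ≤ k := by
    rw [← Finset.card_filter]
    refine le_trans (Finset.card_le_card ?_) hkcard.le
    intro i hi
    simp only [Finset.mem_filter] at hi
    obtain ⟨-, v, -, hOv⟩ := hi
    exact Finset.mem_image.mpr ⟨v, Finset.mem_univ v, hOv⟩
  calc (∑ i ∈ Finset.univ.image P, (Set.range (c i)).ncard)
      ≤ ∑ i ∈ Finset.univ.image P, ((Wrong.filter (fun v => P v = i)).card +
          (if ∃ v : V, P v = i ∧ O v = i then 1 else 0)) :=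
        Finset.sum_le_sum (fun i _ => key i)
    _ = Wrong.card + ∑ i ∈ Finset.univ.image P,
          (if ∃ v : V, P v = i ∧ O v = i then 1 else 0) := by
        rw [Finset.sum_add_distrib, hsum1]
    _ ≤ η + k := by omega
end

section
/- For every integer k ≥ 2 there exists a finite simple graph G with χ(G) = k, a linear order π on V(G), and a prediction P : V(G) → ℕ, such that the prediction error is η(G) = k(k−1) and FirstFitPredictions uses exactly k² = η(G) + k distinct colors on (G, π, P). -/
namespace FFPAux

/-- `k` disjoint copies of `K_k`: vertex `v` lives in copy `v / k`. -/
def gr (k : ℕ) : SimpleGraph (Fin (k*k)) where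
  Adj u v := u ≠ v ∧ (u : ℕ) / k = (v : ℕ) / k
  symm := ⟨fun _ _ ⟨h1, h2⟩ => ⟨h1.symm, h2.symm⟩⟩
  loopless := ⟨fun _ ⟨h1, _⟩ => h1 rfl⟩

variable {k : ℕ}

lemma gr_adj {u v : Fin (k*k)} : (gr k).Adj u v ↔ u ≠ v ∧ (u : ℕ) / k = (v : ℕ) / k :=
  Iff.rfl

lemma div_lt (hk : 0 < k) (v : Fin (k*k)) : (v : ℕ) / k < k :=
  (Nat.div_lt_iff_lt_mul hk).2 v.isLt

def mk' (i j : ℕ) (hi : i < k) (hj : j < k) : Fin (k*k) :=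
  ⟨k*i+j, by calc k*i+j < k*i+k := by omega
    _ = k*(i+1) := by ring
    _ ≤ k*k := Nat.mul_le_mul_left k hi⟩

lemma mk'_div (i j : ℕ) (hi : i < k) (hj : j < k) :
    ((mk' i j hi hj : Fin (k*k)) : ℕ) / k = i := by
  have hk : 0 < k := lt_of_le_of_lt (Nat.zero_le _) hi
  simp [mk', Nat.mul_add_div hk, Nat.div_eq_of_lt hj]

lemma mk'_mod (i j : ℕ) (hi : i < k) (hj : j < k) :
    ((mk' i j hi hj : Fin (k*k)) : ℕ) % k = j := by
  simp [mk', Nat.mul_add_mod, Nat.mod_eq_of_lt hj]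

lemma eq_of_div_mod {u v : Fin (k*k)} (h1 : (u:ℕ)/k = (v:ℕ)/k) (h2 : (u:ℕ)%k = (v:ℕ)%k) :
    u = v := by
  apply Fin.ext
  have hu := Nat.div_add_mod (u:ℕ) k
  have hv := Nat.div_add_mod (v:ℕ) k
  rw [h1, h2] at hu
  omega

lemma mod_ne_of_adj {u v : Fin (k*k)} (h : (gr k).Adj u v) : (u:ℕ) % k ≠ (v:ℕ) % k :=
  fun hm => h.1 (eq_of_div_mod h.2 hm)

/-- The greedy coloring of each prediction class (a copy of `K_k`) is `v % k`. -/
lemma greedy (i : ℕ) :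
    IsGreedyColoring ((gr k).induce {v : Fin (k*k) | (v : ℕ) / k = i})
      (fun v => (v.1 : ℕ) % k) := by
  intro v
  constructor
  · intro u hadj _ hne
    exact mod_ne_of_adj (hadj : (gr k).Adj _ _).symm hne
  · intro n hn
    by_contra hlt
    push_neg at hlt
    have hk : 0 < k := by
      have := v.1.isLt
      by_contra h
      simp [Nat.le_zero.1 (not_lt.1 h)] at this
    have hmod : (v.1 : ℕ) % k < k := Nat.mod_lt _ hk
    have hnk : n < k := lt_trans hlt hmod
    set u0 : Fin (k*k) := mk' ((v.1 : ℕ)/k) n (div_lt hk v.1) hnk with hu0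
    have hdiv : (u0 : ℕ)/k = (v.1 : ℕ)/k := mk'_div _ _ _ _
    have hmod0 : (u0 : ℕ) % k = n := mk'_mod _ _ _ _
    have hmem : u0 ∈ {v : Fin (k*k) | (v : ℕ) / k = i} := by
      have := v.2
      simp only [Set.mem_setOf_eq] at this ⊢
      rw [hdiv, this]
    have hne : u0 ≠ v.1 := by
      intro h
      rw [h] at hmod0
      omega
    have hadj : ((gr k).induce {v : Fin (k*k) | (v : ℕ) / k = i}).Adj v ⟨u0, hmem⟩ :=
      ⟨hne.symm, hdiv.symm⟩
    have hltv : (⟨u0, hmem⟩ : {v : Fin (k*k) | (v : ℕ) / k = i}) < v := by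
      have h1 := Nat.div_add_mod (u0 : ℕ) k
      have h2 := Nat.div_add_mod (v.1 : ℕ) k
      have : (u0 : ℕ) < (v.1 : ℕ) := by rw [hdiv] at h1; omega
      exact this
    exact hn ⟨u0, hmem⟩ hadj hltv hmod0

lemma chrom (hk : 0 < k) : (gr k).chromaticNumber = (k : ℕ∞) := by
  have hcol : (gr k).Colorable k := by
    refine ⟨SimpleGraph.Coloring.mk (fun v => ⟨(v : ℕ) % k, Nat.mod_lt _ hk⟩) ?_⟩
    intro u v hadj h
    exact mod_ne_of_adj hadj (congrArg Fin.val h)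
  have hle : (gr k).chromaticNumber ≤ (k : ℕ∞) := hcol.chromaticNumber_le
  have hge : (k : ℕ∞) ≤ (gr k).chromaticNumber := by
    have hclique : (gr k).IsClique
        ↑((Finset.univ : Finset (Fin k)).map
          ⟨fun j : Fin k => (⟨(j : ℕ), lt_of_lt_of_le j.isLt (Nat.le_mul_of_pos_left k hk)⟩ : Fin (k*k)),
            fun a b h => by simpa [Fin.ext_iff] using h⟩) := by
      intro u hu v hv huv
      simp only [Finset.coe_map, Set.mem_image, Finset.mem_coe] at hu hv
      obtain ⟨a, _, rfl⟩ := hu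
      obtain ⟨b, _, rfl⟩ := hv
      refine ⟨huv, ?_⟩
      show (a : ℕ) / k = (b : ℕ) / k
      rw [Nat.div_eq_of_lt a.isLt, Nat.div_eq_of_lt b.isLt]
    have := hclique.card_le_chromaticNumber
    simpa using this
  exact le_antisymm hle hge

lemma copy_card (i : ℕ) (hi : i < k) :
    (Finset.univ.filter (fun v : Fin (k*k) => (v : ℕ)/k = i)).card = k := by
  have hk : 0 < k := lt_of_le_of_lt (Nat.zero_le _) hi
  have h : (Finset.univ.filter (fun v : Fin (k*k) => (v : ℕ)/k = i)).card
      = (Finset.range k).card := by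
    refine Finset.card_bij' (fun v _ => (v : ℕ) % k)
      (fun j hj => mk' i j hi (Finset.mem_range.1 hj)) ?_ ?_ ?_ ?_
    · intro v _
      exact Finset.mem_range.2 (Nat.mod_lt _ hk)
    · intro j hj
      simp [Finset.mem_filter, mk'_div i j hi (Finset.mem_range.1 hj)]
    · intro v hv
      simp only [Finset.mem_filter] at hv
      exact eq_of_div_mod (by rw [mk'_div, hv.2]) (by rw [mk'_mod])
    · intro j hj
      exact mk'_mod i j hi (Finset.mem_range.1 hj)
  simpa using h

lemma diag_card (hk : 0 < k) :
    (Finset.univ.filter (fun v : Fin (k*k) => (v : ℕ)/k = (v : ℕ)%k)).card = k := by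
  have h : (Finset.univ.filter (fun v : Fin (k*k) => (v : ℕ)/k = (v : ℕ)%k)).card
      = (Finset.range k).card := by
    refine Finset.card_bij' (fun v _ => (v : ℕ) % k)
      (fun j hj => mk' j j (Finset.mem_range.1 hj) (Finset.mem_range.1 hj)) ?_ ?_ ?_ ?_
    · intro v _
      exact Finset.mem_range.2 (Nat.mod_lt _ hk)
    · intro j hj
      have hjk := Finset.mem_range.1 hj
      simp [Finset.mem_filter, mk'_div j j hjk hjk, mk'_mod j j hjk hjk]
    · intro v hv
      simp only [Finset.mem_filter] at hv
      exact eq_of_div_mod (by rw [mk'_div, hv.2]) (by rw [mk'_mod])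
    · intro j hj
      exact mk'_mod j j (Finset.mem_range.1 hj) (Finset.mem_range.1 hj)
  simpa using h

end FFPAux

open FFPAux
/-- Lower bound for FirstFitPredictions: for every `k ≥ 2` there is an instance with
chromatic number `k`, prediction error `η = k(k−1)`, on which FirstFitPredictions uses
exactly `k² = η + k` colors. -/
theorem ffp_lower_bound (k : ℕ) (hk : 2 ≤ k) :
    ∃ (V : Type) (_ : Fintype V) (_ : DecidableEq V) (_ : LinearOrder V)
      (G : SimpleGraph V) (P : V → ℕ)
      (c : (i : ℕ) → ({v : V | P v = i} → ℕ)),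
      G.chromaticNumber = (k : ℕ∞) ∧
      (∀ i : ℕ, IsGreedyColoring (G.induce {v : V | P v = i}) (c i)) ∧
      IsLeast {n : ℕ | ∃ O : V → ℕ, (∀ u v : V, G.Adj u v → O u ≠ O v) ∧
        (Set.range O).ncard = k ∧ n = {v : V | P v ≠ O v}.ncard} (k * (k - 1)) ∧
      (∑ i ∈ Finset.univ.image P, (Set.range (c i)).ncard) = k * k := by
  have hk0 : 0 < k := by omega
  refine ⟨Fin (k*k), inferInstance, inferInstance, inferInstance, gr k,
    fun v => (v : ℕ)/k, fun _ v => (v.1 : ℕ) % k, chrom hk0, fun i => greedy i, ?_, ?_⟩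
  · constructor
    · -- membership: O v = v % k
      refine ⟨fun v => (v : ℕ) % k, fun u v hadj => mod_ne_of_adj hadj, ?_, ?_⟩
      · have : Set.range (fun v : Fin (k*k) => (v : ℕ) % k) = ↑(Finset.range k) := by
          ext n
          simp only [Set.mem_range, Finset.coe_range, Set.mem_Iio]
          constructor
          · rintro ⟨v, rfl⟩; exact Nat.mod_lt _ hk0
          · intro hn; exact ⟨mk' 0 n hk0 hn, mk'_mod 0 n hk0 hn⟩
        rw [this, Set.ncard_coe_finset, Finset.card_range]
      · classical
        rw [Set.ncard_eq_toFinset_card']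
        have he : {v : Fin (k*k) | (v : ℕ)/k ≠ (v : ℕ)%k}.toFinset
            = Finset.univ.filter (fun v : Fin (k*k) => ¬((v : ℕ)/k = (v : ℕ)%k)) := by
          ext v; simp [Set.mem_toFinset]
        rw [he]
        have h1 := Finset.card_filter_add_card_filter_not
          (s := (Finset.univ : Finset (Fin (k*k))))
          (p := fun v : Fin (k*k) => (v : ℕ)/k = (v : ℕ)%k)
        rw [diag_card hk0, Finset.card_univ, Fintype.card_fin] at h1
        obtain ⟨m, rfl⟩ : ∃ m, k = m + 1 := ⟨k - 1, by omega⟩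
        have h2 : (m+1)*(m+1) = (m+1)*m + (m+1) := by ring
        simp only [Nat.add_sub_cancel]
        omega
    · -- lower bound
      rintro n ⟨O, hO, _, rfl⟩
      classical
      rw [Set.ncard_eq_toFinset_card']
      have he : {v : Fin (k*k) | (v : ℕ)/k ≠ O v}.toFinset
          = Finset.univ.filter (fun v : Fin (k*k) => (v : ℕ)/k ≠ O v) := by
        ext v; simp [Set.mem_toFinset]
      rw [he]
      set F := Finset.univ.filter (fun v : Fin (k*k) => (v : ℕ)/k ≠ O v) with hF
      have hcard : F.card
          = ∑ i ∈ Finset.range k, (F.filter (fun v : Fin (k*k) => (v : ℕ)/k = i)).card :=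
        Finset.card_eq_sum_card_fiberwise (fun v _ => Finset.mem_range.2 (div_lt hk0 v))
      have hbound : ∀ i ∈ Finset.range k,
          k - 1 ≤ (F.filter (fun v : Fin (k*k) => (v : ℕ)/k = i)).card := by
        intro i hi
        have hik := Finset.mem_range.1 hi
        set A := Finset.univ.filter (fun v : Fin (k*k) => (v : ℕ)/k = i) with hA
        set B := A.filter (fun v => O v = i) with hB
        have hBle : B.card ≤ 1 := by
          rw [Finset.card_le_one]
          intro a ha b hb
          simp only [hB, hA, Finset.mem_filter, Finset.mem_univ, true_and] at ha hb
          by_contra hab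
          exact hO a b ⟨hab, ha.1.trans hb.1.symm⟩ (ha.2.trans hb.2.symm)
        have heq : F.filter (fun v : Fin (k*k) => (v : ℕ)/k = i) = A \ B := by
          ext v
          simp only [hF, hA, hB, Finset.mem_filter, Finset.mem_sdiff, Finset.mem_univ, true_and,
            Finset.filter_filter]
          constructor
          · rintro ⟨hne, hdiv⟩
            exact ⟨hdiv, fun h => hne (by rw [hdiv, h.2])⟩
          · rintro ⟨hdiv, h⟩
            exact ⟨fun hO' => h ⟨hdiv, by rw [← hO', hdiv]⟩, hdiv⟩
        have hsub : B ⊆ A := Finset.filter_subset _ _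
        rw [heq, Finset.card_sdiff_of_subset hsub]
        have hAcard : A.card = k := copy_card i hik
        omega
      calc k * (k-1) = ∑ _i ∈ Finset.range k, (k-1) := by
            rw [Finset.sum_const, Finset.card_range, smul_eq_mul]
        _ ≤ _ := Finset.sum_le_sum hbound
        _ = F.card := hcard.symm
  · -- sum of colors
    have himg : Finset.univ.image (fun v : Fin (k*k) => (v : ℕ)/k) = Finset.range k := by
      ext i
      simp only [Finset.mem_image, Finset.mem_univ, true_and, Finset.mem_range]
      constructor
      · rintro ⟨v, rfl⟩; exact div_lt hk0 v
      · intro hi; exact ⟨mk' i 0 hi hk0, mk'_div i 0 hi hk0⟩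
    rw [himg]
    have hterm : ∀ i ∈ Finset.range k,
        (Set.range (fun v : {v : Fin (k*k) | (v : ℕ)/k = i} => (v.1 : ℕ) % k)).ncard = k := by
      intro i hi
      have hik := Finset.mem_range.1 hi
      have : Set.range (fun v : {v : Fin (k*k) | (v : ℕ)/k = i} => (v.1 : ℕ) % k)
          = ↑(Finset.range k) := by
        ext n
        simp only [Set.mem_range, Finset.coe_range, Set.mem_Iio]
        constructor
        · rintro ⟨v, rfl⟩; exact Nat.mod_lt _ hk0
        · intro hn
          exact ⟨⟨mk' i n hik hn, mk'_div i n hik hn⟩, mk'_mod i n hik hn⟩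
      rw [this, Set.ncard_coe_finset, Finset.card_range]
    rw [Finset.sum_congr rfl hterm, Finset.sum_const, Finset.card_range, smul_eq_mul]
end

section
/- The greedy coloring is not weakly monotone: for every constant c > 0 there exist n, a finite simple graph G with a linear order π on V(G), and a suffix of π inducing a subgraph G' with induced order π', such that the number of colors used by the greedy coloring on (G', π') exceeds c times the number of colors used by the greedy coloring on (G, π). -/
/-- Crown-like graph on `Fin N` (vertices `2i`/`2i+1` are `x_{i+1}`/`y_{i+1}`). -/
def crown (N : ℕ) : SimpleGraph (Fin N) where
  Adj a b := a.val % 2 ≠ b.val % 2 ∧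
    (a.val / 2 ≠ b.val / 2 ∨ (a.val / 2 = 0 ∧ b.val / 2 = 0))
  symm := by constructor; rintro a b ⟨h1, h2⟩; exact ⟨h1.symm, by tauto⟩
  loopless := by constructor; rintro a ⟨h1, _⟩; exact h1 rfl

lemma crown_adj {N : ℕ} {a b : Fin N} : (crown N).Adj a b ↔
    (a.val % 2 ≠ b.val % 2 ∧ (a.val / 2 ≠ b.val / 2 ∨ (a.val / 2 = 0 ∧ b.val / 2 = 0))) :=
  Iff.rfl

/-- Greedy (FirstFit) is not weakly monotone: for every constant `C > 0` there is a finite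
linearly ordered graph `G` and a suffix `s` of the order (an upward-closed set of vertices)
such that greedy on the induced suffix subgraph uses more than `C` times as many colors as
greedy on the whole graph. -/
theorem firstFit_not_weakly_monotone (C : ℕ) (hC : 0 < C) :
    ∃ (V : Type) (_ : Fintype V) (_ : LinearOrder V) (G : SimpleGraph V) (s : Set V),
      (∀ u v : V, u ∈ s → u ≤ v → v ∈ s) ∧
      ∃ (c₁ : V → ℕ) (c₂ : {v : V // v ∈ s} → ℕ),
        IsGreedyColoring G c₁ ∧ IsGreedyColoring (G.induce s) c₂ ∧
        C * (Set.range c₁).ncard < (Set.range c₂).ncard := by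
  set n : ℕ := 2 * C + 2 with hn
  refine ⟨Fin (2 * n), inferInstance, inferInstance, crown (2 * n),
    {v | 2 ≤ v.val}, ?_, (fun v => v.val % 2), (fun v => v.1.val / 2 - 1), ?_, ?_, ?_⟩
  · intro u v hu huv
    have := Fin.le_def.mp huv
    simp only [Set.mem_setOf_eq] at *
    omega
  · -- greedy on the full graph
    intro v
    constructor
    · intro u hadj hlt h
      have h1 := (crown_adj.mp hadj).1
      have h' : u.val % 2 = v.val % 2 := h
      exact h1 (by omega)
    · intro m hm
      by_contra hlt
      push_neg at hlt
      have hv1 : v.val % 2 = 1 := by omega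
      have hm0 : m = 0 := by omega
      have hN : 0 < 2 * n := by omega
      have hv0 : 0 < v.val := by omega
      refine hm ⟨0, hN⟩ (crown_adj.mpr ?_) ?_ ?_
      · refine ⟨show v.val % 2 ≠ 0 % 2 by omega, ?_⟩
        show v.val / 2 ≠ 0 / 2 ∨ (v.val / 2 = 0 ∧ (0:ℕ) / 2 = 0)
        rcases Nat.eq_zero_or_pos (v.val / 2) with h0 | h0
        · exact Or.inr ⟨h0, rfl⟩
        · exact Or.inl (by omega)
      · exact Fin.lt_def.mpr (show 0 < v.val from hv0)
      · show (0 : ℕ) % 2 = m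
        omega
  · -- greedy on the suffix
    intro v
    obtain ⟨⟨vv, hvN⟩, hvs⟩ := v
    have hvs' : 2 ≤ vv := hvs
    constructor
    · rintro ⟨⟨uu, huN⟩, hus⟩ hadj hlt h
      have hus' : 2 ≤ uu := hus
      obtain ⟨h1, h2⟩ := crown_adj.mp hadj
      have h' : uu / 2 - 1 = vv / 2 - 1 := h
      simp only [Function.Embedding.coe_subtype] at h1 h2
      omega
    · intro m hm
      by_contra hlt
      push_neg at hlt
      have hlt' : m < vv / 2 - 1 := hlt
      have hpar : vv % 2 = 0 ∨ vv % 2 = 1 := by omega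
      rcases hpar with hpar | hpar
      · have hval : 2 * m + 3 < 2 * n := by omega
        refine hm ⟨⟨2 * m + 3, hval⟩, show 2 ≤ 2 * m + 3 by omega⟩ (crown_adj.mpr ?_) ?_ ?_
        · refine ⟨show vv % 2 ≠ (2 * m + 3) % 2 by omega, Or.inl ?_⟩
          show vv / 2 ≠ (2 * m + 3) / 2
          omega
        · exact Subtype.mk_lt_mk.mpr (Fin.lt_def.mpr (show 2 * m + 3 < vv by omega))
        · show (2 * m + 3) / 2 - 1 = m
          omega
      · have hval : 2 * m + 2 < 2 * n := by omega
        refine hm ⟨⟨2 * m + 2, hval⟩, show 2 ≤ 2 * m + 2 by omega⟩ (crown_adj.mpr ?_) ?_ ?_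
        · refine ⟨show vv % 2 ≠ (2 * m + 2) % 2 by omega, Or.inl ?_⟩
          show vv / 2 ≠ (2 * m + 2) / 2
          omega
        · exact Subtype.mk_lt_mk.mpr (Fin.lt_def.mpr (show 2 * m + 2 < vv by omega))
        · show (2 * m + 2) / 2 - 1 = m
          omega
  · -- counting colors
    have h1 : Set.range (fun v : Fin (2 * n) => v.val % 2) = {0, 1} := by
      ext m
      constructor
      · rintro ⟨v, rfl⟩
        have : v.val % 2 = 0 ∨ v.val % 2 = 1 := by omega
        simpa using this
      · rintro hm
        simp only [Set.mem_insert_iff, Set.mem_singleton_iff] at hm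
        rcases hm with rfl | rfl
        · exact ⟨⟨0, by omega⟩, by simp⟩
        · exact ⟨⟨1, by omega⟩, by simp⟩
    have h2 : Set.range (fun v : {v : Fin (2 * n) // v ∈ {v : Fin (2*n) | 2 ≤ v.val}} =>
        v.1.val / 2 - 1) = ↑(Finset.range (2 * C + 1)) := by
      ext m
      simp only [Set.mem_range, Finset.coe_range, Set.mem_Iio]
      constructor
      · rintro ⟨⟨⟨vv, hvN⟩, hvs⟩, rfl⟩
        have : 2 ≤ vv := hvs
        show vv / 2 - 1 < 2 * C + 1
        omega
      · intro hmlt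
        exact ⟨⟨⟨2 * (m + 1), by omega⟩, show 2 ≤ 2 * (m + 1) by omega⟩,
          show 2 * (m + 1) / 2 - 1 = m by omega⟩
    rw [h1, h2, Set.ncard_pair (by norm_num : (0:ℕ) ≠ 1), Set.ncard_coe_finset,
      Finset.card_range]
    omega
end

section
/- Let G be a finite simple bipartite graph with bipartition V(G) = V_1 ∪ V_2, and let G' be obtained from G by adding two new vertices v and v', with v adjacent to v' and to every vertex of V_1, and v' adjacent to every vertex of V_2. Then G' is bipartite, and if G contains no induced path on 6 vertices, then G' contains no induced path on 6 vertices. -/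
/-- `G` has no induced path on 6 vertices. -/
def P6Free {V : Type*} (G : SimpleGraph V) : Prop :=
  ¬ ∃ f : Fin 6 → V, Function.Injective f ∧
      ∀ i j : Fin 6, G.Adj (f i) (f j) ↔ (i.val + 1 = j.val ∨ j.val + 1 = i.val)

/-- The graph `G'` obtained from `G` by adding a vertex `v = Sum.inr false` adjacent to all
of `V₁`, a vertex `v' = Sum.inr true` adjacent to all of `V₂`, and the edge `vv'`. -/
def augmented {V : Type*} (G : SimpleGraph V) (V₁ V₂ : Set V) :
    SimpleGraph (V ⊕ Bool) :=
  SimpleGraph.fromRel fun x y =>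
    (∃ a b : V, x = Sum.inl a ∧ y = Sum.inl b ∧ G.Adj a b) ∨
    (∃ a : V, x = Sum.inr false ∧ y = Sum.inl a ∧ a ∈ V₁) ∨
    (∃ a : V, x = Sum.inr true ∧ y = Sum.inl a ∧ a ∈ V₂) ∨
    (x = Sum.inr false ∧ y = Sum.inr true)


lemma aug_adj_inl {V : Type*} (G : SimpleGraph V) (V₁ V₂ : Set V) (a b : V) :
    (augmented G V₁ V₂).Adj (Sum.inl a) (Sum.inl b) ↔ G.Adj a b := by
  simp [augmented, SimpleGraph.fromRel_adj]
  constructor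
  · rintro ⟨h1, h2⟩; tauto
  · intro h; exact ⟨fun e => h.ne e, Or.inl h⟩

lemma aug_adj_inr_false {V : Type*} (G : SimpleGraph V) (V₁ V₂ : Set V) (a : V) :
    (augmented G V₁ V₂).Adj (Sum.inr false) (Sum.inl a) ↔ a ∈ V₁ := by
  simp [augmented, SimpleGraph.fromRel_adj]

lemma aug_adj_inr_true {V : Type*} (G : SimpleGraph V) (V₁ V₂ : Set V) (a : V) :
    (augmented G V₁ V₂).Adj (Sum.inr true) (Sum.inl a) ↔ a ∈ V₂ := by
  simp [augmented, SimpleGraph.fromRel_adj]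

lemma aug_adj_inr_inr {V : Type*} (G : SimpleGraph V) (V₁ V₂ : Set V) (b b' : Bool)
    (h : b ≠ b') : (augmented G V₁ V₂).Adj (Sum.inr b) (Sum.inr b') := by
  have h0 : (augmented G V₁ V₂).Adj (Sum.inr false) (Sum.inr true) := by
    simp [augmented, SimpleGraph.fromRel_adj]
  cases b <;> cases b' <;> simp_all
  exact h0.symm

/-- Key contradiction: if `f i` is a special vertex and `j, k = j+1` are two consecutive
positions both non-adjacent (as positions) to `i`, we get a contradiction. -/
lemma key {V : Type*} (G : SimpleGraph V) (V₁ V₂ : Set V)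
    (hbip : ∀ a b : V, G.Adj a b → (a ∈ V₁ ∧ b ∈ V₂) ∨ (a ∈ V₂ ∧ b ∈ V₁))
    (f : Fin 6 → V ⊕ Bool) (hinj : Function.Injective f)
    (hadj : ∀ i j : Fin 6, (augmented G V₁ V₂).Adj (f i) (f j) ↔
      (i.val + 1 = j.val ∨ j.val + 1 = i.val))
    (b : Bool) (i j k : Fin 6) (hfi : f i = Sum.inr b)
    (hjk : j.val + 1 = k.val)
    (hij : ¬(i.val + 1 = j.val ∨ j.val + 1 = i.val)) (hji : j ≠ i)
    (hik : ¬(i.val + 1 = k.val ∨ k.val + 1 = i.val)) (hki : k ≠ i) : False := by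
  have hgen : ∀ m : Fin 6, ¬(i.val + 1 = m.val ∨ m.val + 1 = i.val) → m ≠ i →
      ∃ a : V, f m = Sum.inl a ∧ (b = false → a ∉ V₁) ∧ (b = true → a ∉ V₂) := by
    intro m hm hmi
    have hnot : ¬ (augmented G V₁ V₂).Adj (f i) (f m) := fun h => hm ((hadj i m).mp h)
    rw [hfi] at hnot
    match hfm : f m with
    | Sum.inl a =>
      rw [hfm] at hnot
      refine ⟨a, rfl, ?_, ?_⟩ <;> rintro rfl ha
      · exact hnot ((aug_adj_inr_false G V₁ V₂ a).mpr ha)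
      · exact hnot ((aug_adj_inr_true G V₁ V₂ a).mpr ha)
    | Sum.inr b' =>
      rw [hfm] at hnot
      by_cases hbb : b = b'
      · exact (hmi (hinj (by rw [hfm, hfi, hbb]))).elim
      · exact (hnot (aug_adj_inr_inr G V₁ V₂ b b' hbb)).elim
  obtain ⟨a, ha, ha1, ha2⟩ := hgen j hij hji
  obtain ⟨a', ha', ha'1, ha'2⟩ := hgen k hik hki
  have hadjk : (augmented G V₁ V₂).Adj (f j) (f k) := (hadj j k).mpr (Or.inl hjk)
  rw [ha, ha'] at hadjk
  have hG : G.Adj a a' := (aug_adj_inl G V₁ V₂ a a').mp hadjk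
  rcases hbip a a' hG with ⟨h1, h2⟩ | ⟨h1, h2⟩ <;> cases b
  · exact ha1 rfl h1
  · exact ha'2 rfl h2
  · exact ha'1 rfl h2
  · exact ha2 rfl h1

theorem augmented_bipartite_and_P6Free {V : Type*} [Fintype V]
    (G : SimpleGraph V) (V₁ V₂ : Set V)
    (hcover : ∀ v : V, v ∈ V₁ ∨ v ∈ V₂)
    (hdisj : ∀ v : V, ¬(v ∈ V₁ ∧ v ∈ V₂))
    (hbip : ∀ a b : V, G.Adj a b → (a ∈ V₁ ∧ b ∈ V₂) ∨ (a ∈ V₂ ∧ b ∈ V₁)) :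
    (augmented G V₁ V₂).Colorable 2 ∧ (P6Free G → P6Free (augmented G V₁ V₂)) := by
  classical
  constructor
  · -- 2-colorability
    refine ⟨⟨fun x => match x with
      | Sum.inl a => if a ∈ V₁ then 0 else 1
      | Sum.inr b => if b then 0 else 1, ?_⟩⟩
    intro x y hxy
    rcases x with a | b <;> rcases y with c | b'
    · have hG := (aug_adj_inl G V₁ V₂ a c).mp hxy
      simp only
      rcases hbip a c hG with ⟨h1, h2⟩ | ⟨h1, h2⟩
      · have hc : c ∉ V₁ := fun hc => hdisj c ⟨hc, h2⟩
        simp [h1, hc]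
      · have ha : a ∉ V₁ := fun hc => hdisj a ⟨hc, h1⟩
        simp [ha, h2]
    · simp only
      cases b'
      · have ha := (aug_adj_inr_false G V₁ V₂ a).mp hxy.symm
        simp [ha]
      · have ha := (aug_adj_inr_true G V₁ V₂ a).mp hxy.symm
        have ha' : a ∉ V₁ := fun hc => hdisj a ⟨hc, ha⟩
        simp [ha']
    · simp only
      cases b
      · have ha := (aug_adj_inr_false G V₁ V₂ c).mp hxy
        simp [ha]
      · have ha := (aug_adj_inr_true G V₁ V₂ c).mp hxy
        have ha' : c ∉ V₁ := fun hc => hdisj c ⟨hc, ha⟩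
        simp [ha']
    · have hne : b ≠ b' := fun h => hxy.ne (by rw [h])
      cases b <;> cases b' <;> simp_all
  · -- P6-freeness
    rintro hG ⟨f, hinj, hadj⟩
    by_cases hb : ∃ i b, f i = Sum.inr b
    · obtain ⟨i, b, hi⟩ := hb
      have hK := key G V₁ V₂ hbip f hinj hadj b i
      fin_cases i
      · exact hK 2 3 hi rfl (by decide) (by decide) (by decide) (by decide)
      · exact hK 3 4 hi rfl (by decide) (by decide) (by decide) (by decide)
      · exact hK 4 5 hi rfl (by decide) (by decide) (by decide) (by decide)
      · exact hK 0 1 hi rfl (by decide) (by decide) (by decide) (by decide)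
      · exact hK 0 1 hi rfl (by decide) (by decide) (by decide) (by decide)
      · exact hK 2 3 hi rfl (by decide) (by decide) (by decide) (by decide)
    · push_neg at hb
      have hex : ∀ i : Fin 6, ∃ a : V, f i = Sum.inl a := by
        intro i
        match h : f i with
        | Sum.inl a => exact ⟨a, rfl⟩
        | Sum.inr b => exact absurd h (hb i b)
      choose g hg using hex
      refine hG ⟨g, ?_, ?_⟩
      · intro i j hij
        exact hinj (by rw [hg i, hg j, hij])
      · intro i j
        rw [← hadj i j, hg i, hg j, aug_adj_inl]
end
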